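/- Let Λ ∈ ℝ^{n×n} be a matrix in Jordan canonical form such that every eigenvalue of Λ has geometric multiplicity 1 (Λ is non-derogatory). Then the pair (Λ, 𝟏_n) is controllable, i.e., the controllability matrix [𝟏_n, Λ𝟏_n, ..., Λ^{n-1}𝟏_n] has rank n, where 𝟏_n is the all-ones vector. -/

import Mathlib

open Polynomial Matrix Finset


lemma jordan_mulVec {n : ℕ} (Λ : Matrix (Fin n) (Fin n) ℝ)
    (hzero : ∀ i j : Fin n, (j : ℕ) ≠ (i : ℕ) → (j : ℕ) ≠ (i : ℕ) + 1 → Λ i j = 0)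
    (v : Fin n → ℝ) (i : Fin n) :
    Λ.mulVec v i = Λ i i * v i +
      (if h : (i:ℕ)+1 < n then Λ i ⟨(i:ℕ)+1, h⟩ * v ⟨(i:ℕ)+1, h⟩ else 0) := by
  simp only [Matrix.mulVec, dotProduct]
  by_cases h : (i:ℕ)+1 < n
  · rw [dif_pos h]
    have hne : i ≠ (⟨(i:ℕ)+1, h⟩ : Fin n) := by
      intro he; have := congrArg Fin.val he; simp at this
    rw [← Finset.sum_pair (f := fun j => Λ i j * v j) hne]
    refine (Finset.sum_subset (Finset.subset_univ _) ?_).symm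
    intro j _ hj
    simp only [Finset.mem_insert, Finset.mem_singleton] at hj
    push_neg at hj
    rw [hzero i j ?_ ?_, zero_mul]
    · exact fun he => hj.1 (Fin.ext he)
    · exact fun he => hj.2 (Fin.ext he)
  · rw [dif_neg h, add_zero]
    refine Finset.sum_eq_single i ?_ (by simp)
    intro j _ hj
    rw [hzero i j ?_ ?_, zero_mul]
    · exact fun he => hj (Fin.ext he)
    · omega

noncomputable def krylovVec {n : ℕ} (Λ : Matrix (Fin n) (Fin n) ℝ) (p : ℝ[X]) : Fin n → ℝ :=
  (aeval Λ p).mulVec (fun _ => 1)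

lemma krylovVec_step {n : ℕ} (Λ : Matrix (Fin n) (Fin n) ℝ)
    (hzero : ∀ i j : Fin n, (j : ℕ) ≠ (i : ℕ) → (j : ℕ) ≠ (i : ℕ) + 1 → Λ i j = 0)
    (p : ℝ[X]) (c : ℝ) (i : Fin n) :
    krylovVec Λ ((X - C c) * p) i = (Λ i i - c) * krylovVec Λ p i +
      (if h : (i:ℕ)+1 < n then Λ i ⟨(i:ℕ)+1, h⟩ * krylovVec Λ p ⟨(i:ℕ)+1, h⟩ else 0) := by
  unfold krylovVec
  rw [_root_.map_mul, ← mulVec_mulVec]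
  have h1 : (aeval Λ (X - C c)) = Λ - c • 1 := by
    simp [map_sub, aeval_X, aeval_C, Algebra.algebraMap_eq_smul_one]
  rw [h1, sub_mulVec, smul_mulVec, one_mulVec]
  simp only [Pi.sub_apply, Pi.smul_apply, smul_eq_mul]
  rw [jordan_mulVec Λ hzero ((aeval Λ p).mulVec fun _ => 1) i]
  ring

lemma krylovVec_mem {n : ℕ} (Λ : Matrix (Fin n) (Fin n) ℝ) (p : ℝ[X]) (hp : p.natDegree < n) :
    krylovVec Λ p ∈ Submodule.span ℝ
      {v : Fin n → ℝ | ∃ i : ℕ, i < n ∧ v = (Λ ^ i).mulVec (fun _ => 1)} := by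
  unfold krylovVec
  rw [aeval_eq_sum_range' hp]
  have key : ∀ s : Finset ℕ,
      ((∑ i ∈ s, p.coeff i • Λ ^ i) *ᵥ fun _ => 1) =
        ∑ i ∈ s, p.coeff i • ((Λ ^ i) *ᵥ fun _ => 1) := by
    intro s
    induction s using Finset.induction_on with
    | empty => simp [Matrix.zero_mulVec]
    | insert _ _ hns ih =>
        rw [Finset.sum_insert hns, Finset.sum_insert hns, add_mulVec, smul_mulVec, ih]
  rw [key]
  exact sum_mem fun i hi => Submodule.smul_mem _ _
    (Submodule.subset_span ⟨i, Finset.mem_range.mp hi, rfl⟩)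




/-- If `Λ` is a real matrix in Jordan canonical form that is non-derogatory
(every eigenvalue has geometric multiplicity 1, i.e. any two equal diagonal
entries belong to the same Jordan block), then `(Λ, 𝟏ₙ)` is controllable. -/
theorem jordan_nonderogatory_controllable {n : ℕ}
    (Λ : Matrix (Fin n) (Fin n) ℝ)
    -- Λ is in Jordan form: nonzero entries only on the diagonal and superdiagonal
    (hzero : ∀ i j : Fin n, (j : ℕ) ≠ (i : ℕ) → (j : ℕ) ≠ (i : ℕ) + 1 → Λ i j = 0)
    -- superdiagonal entries are 0 or 1
    (hsup01 : ∀ (i : Fin n) (hi : (i : ℕ) + 1 < n),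
      Λ i ⟨(i : ℕ) + 1, hi⟩ = 0 ∨ Λ i ⟨(i : ℕ) + 1, hi⟩ = 1)
    -- within a Jordan block the diagonal entry is constant
    (hblock : ∀ (i : Fin n) (hi : (i : ℕ) + 1 < n),
      Λ i ⟨(i : ℕ) + 1, hi⟩ = 1 → Λ i i = Λ ⟨(i : ℕ) + 1, hi⟩ ⟨(i : ℕ) + 1, hi⟩)
    -- non-derogatory: equal eigenvalues lie in the same Jordan block, i.e. all
    -- superdiagonal entries between two equal diagonal entries are 1
    (hnonderog : ∀ i j : Fin n, (i : ℕ) < (j : ℕ) → Λ i i = Λ j j →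
      ∀ (k : Fin n) (hk : (k : ℕ) + 1 < n), (i : ℕ) ≤ (k : ℕ) → (k : ℕ) < (j : ℕ) →
        Λ k ⟨(k : ℕ) + 1, hk⟩ = 1) :
    Submodule.span ℝ
      {v : Fin n → ℝ | ∃ i : ℕ, i < n ∧ v = (Λ ^ i).mulVec (fun _ => 1)} = ⊤ := by
  set S := Submodule.span ℝ
      {v : Fin n → ℝ | ∃ i : ℕ, i < n ∧ v = (Λ ^ i).mulVec (fun _ => 1)} with hSdef
  -- eigenvalues separated by a block boundary are distinct
  have hdiag_ne : ∀ (i m k : Fin n) (hk : (k:ℕ)+1 < n), (i:ℕ) ≤ (k:ℕ) → (k:ℕ) < (m:ℕ) →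
      Λ k ⟨(k:ℕ)+1, hk⟩ = 0 → Λ i i ≠ Λ m m := by
    intro i m k hk h1 h2 h0 he
    have := hnonderog i m (by omega) he k hk h1 h2
    rw [h0] at this; norm_num at this
  -- main induction: witnesses with prescribed support and nonvanishing
  have key : ∀ m : ℕ, ∀ j : Fin n, (j:ℕ) + m + 1 = n →
      ∃ p : ℝ[X], p.natDegree ≤ m ∧
        (∀ k : Fin n, (j:ℕ) < (k:ℕ) → krylovVec Λ p k = 0) ∧
        (∀ i : Fin n, (i:ℕ) ≤ (j:ℕ) →
          ((i:ℕ) = (j:ℕ) ∨ ∀ hi : (i:ℕ)+1 < n, Λ i ⟨(i:ℕ)+1, hi⟩ = 0) →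
          krylovVec Λ p i ≠ 0) := by
    intro m
    induction m with
    | zero =>
      intro j hj
      refine ⟨1, by simp, ?_, ?_⟩
      · intro k hk; exact absurd k.isLt (by omega)
      · intro i _ _
        have : krylovVec Λ 1 i = 1 := by simp [krylovVec]
        rw [this]; norm_num
    | succ m IH =>
      intro j hj
      have hj1 : (j:ℕ)+1 < n := by omega
      set j' : Fin n := ⟨(j:ℕ)+1, hj1⟩ with hj'
      obtain ⟨p, hdeg, htail, hnz⟩ := IH j' (by simp only [hj']; omega)
      have hdeg' : ∀ c : ℝ, ((X - C c) * p).natDegree ≤ m + 1 := by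
        intro c
        calc ((X - C c) * p).natDegree ≤ (X - C c).natDegree + p.natDegree :=
              natDegree_mul_le
          _ ≤ m + 1 := by rw [natDegree_X_sub_C]; omega
      -- tail vanishing, provided the constant equals the eigenvalue of j'
      have tail : ∀ c : ℝ, c = Λ j' j' → ∀ k : Fin n, (j:ℕ) < (k:ℕ) →
          krylovVec Λ ((X - C c) * p) k = 0 := by
        intro c hc k hk
        rw [krylovVec_step Λ hzero]
        have hterm2 : (if h : (k:ℕ)+1 < n then
            Λ k ⟨(k:ℕ)+1, h⟩ * krylovVec Λ p ⟨(k:ℕ)+1, h⟩ else 0) = 0 := by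
          by_cases h : (k:ℕ)+1 < n
          · rw [dif_pos h, htail ⟨(k:ℕ)+1, h⟩ (by simp only [hj']; omega), mul_zero]
          · rw [dif_neg h]
        rw [hterm2, add_zero]
        by_cases hkj : (k:ℕ) = (j:ℕ)+1
        · have : k = j' := Fin.ext hkj
          subst this
          rw [hc, sub_self, zero_mul]
        · rw [htail k (by simp only [hj']; omega), mul_zero]
      rcases hsup01 j hj1 with hs0 | hs1
      · -- j is the end of its block; kill the next block's eigenvalue
        refine ⟨(X - C (Λ j' j')) * p, hdeg' _, tail _ rfl, ?_⟩
        intro i hi hcond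
        have hsupi : ∀ hi2 : (i:ℕ)+1 < n, Λ i ⟨(i:ℕ)+1, hi2⟩ = 0 := by
          rcases hcond with hij | hsup
          · intro hi2
            have : i = j := Fin.ext hij
            subst this
            exact hs0
          · exact hsup
        rw [krylovVec_step Λ hzero]
        have hterm2 : (if h : (i:ℕ)+1 < n then
            Λ i ⟨(i:ℕ)+1, h⟩ * krylovVec Λ p ⟨(i:ℕ)+1, h⟩ else 0) = 0 := by
          by_cases h : (i:ℕ)+1 < n
          · rw [dif_pos h, hsupi h, zero_mul]
          · rw [dif_neg h]
        rw [hterm2, add_zero]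
        refine mul_ne_zero (sub_ne_zero.mpr ?_) ?_
        · exact hdiag_ne i j' j hj1 hi (by simp only [hj']; omega) hs0
        · exact hnz i (by simp only [hj']; omega) (Or.inr hsupi)
      · -- j is inside a block; use the block eigenvalue
        have hclam : Λ j j = Λ j' j' := hblock j hj1 hs1
        refine ⟨(X - C (Λ j j)) * p, hdeg' _, tail _ hclam, ?_⟩
        intro i hi hcond
        by_cases hij : (i:ℕ) = (j:ℕ)
        · -- i = j : the superdiagonal 1 pulls down the nonzero entry at j'
          have : i = j := Fin.ext hij
          subst this
          rw [krylovVec_step Λ hzero]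
          rw [sub_self, zero_mul, zero_add, dif_pos hj1]
          rw [hs1, one_mul]
          exact hnz j' (le_refl _) (Or.inl rfl)
        · have hsup : ∀ hi2 : (i:ℕ)+1 < n, Λ i ⟨(i:ℕ)+1, hi2⟩ = 0 := by
            rcases hcond with h' | h'
            · exact absurd h' hij
            · exact h'
          have hilt : (i:ℕ) < (j:ℕ) := by omega
          have hi2 : (i:ℕ)+1 < n := by omega
          rw [krylovVec_step Λ hzero]
          have hterm2 : (if h : (i:ℕ)+1 < n then
              Λ i ⟨(i:ℕ)+1, h⟩ * krylovVec Λ p ⟨(i:ℕ)+1, h⟩ else 0) = 0 := by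
            rw [dif_pos hi2, hsup hi2, zero_mul]
          rw [hterm2, add_zero]
          refine mul_ne_zero (sub_ne_zero.mpr ?_) ?_
          · exact hdiag_ne i j i hi2 (le_refl _) hilt (hsup hi2)
          · exact hnz i (by simp only [hj']; omega) (Or.inr hsup)
  -- now show every standard basis vector is in S
  have hbasis : ∀ N : ℕ, ∀ j : Fin n, (j:ℕ) < N →
      (fun k : Fin n => if j = k then (1:ℝ) else 0) ∈ S := by
    intro N
    induction N with
    | zero => intro j hj; omega
    | succ N IH =>
      intro j hj
      by_cases hjN : (j:ℕ) < N
      · exact IH j hjN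
      · obtain ⟨p, hdeg, htail, hnz⟩ := key (n - (j:ℕ) - 1) j (by omega)
        have hvmem : krylovVec Λ p ∈ S := krylovVec_mem Λ p (by omega)
        have hvj : krylovVec Λ p j ≠ 0 := hnz j (le_refl _) (Or.inl rfl)
        have heq : (fun k : Fin n => if j = k then (1:ℝ) else 0) =
            (krylovVec Λ p j)⁻¹ • (krylovVec Λ p -
              ∑ k ∈ univ.filter (fun k : Fin n => (k:ℕ) < (j:ℕ)),
                krylovVec Λ p k • (fun l : Fin n => if k = l then (1:ℝ) else 0)) := by
          funext l
          have hsum : (∑ k ∈ univ.filter (fun k : Fin n => (k:ℕ) < (j:ℕ)),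
              krylovVec Λ p k • (fun l : Fin n => if k = l then (1:ℝ) else 0)) l =
              if (l:ℕ) < (j:ℕ) then krylovVec Λ p l else 0 := by
            rw [Finset.sum_apply]
            simp only [Pi.smul_apply, smul_eq_mul, mul_ite, mul_one, mul_zero]
            rw [Finset.sum_ite_eq' (univ.filter (fun k : Fin n => (k:ℕ) < (j:ℕ))) l
              (fun k => krylovVec Λ p k)]
            simp [Finset.mem_filter]
          simp only [Pi.smul_apply, Pi.sub_apply, hsum, smul_eq_mul]
          by_cases hlj : (l:ℕ) < (j:ℕ)
          · rw [if_pos hlj, sub_self, mul_zero, if_neg]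
            intro h; exact absurd (congrArg Fin.val h) (by omega)
          · by_cases hlj2 : l = j
            · subst hlj2
              rw [if_neg hlj, sub_zero, if_pos rfl, inv_mul_cancel₀ hvj]
            · have : (j:ℕ) < (l:ℕ) := by
                rcases Nat.lt_or_ge (j:ℕ) (l:ℕ) with h | h
                · exact h
                · exact absurd (Fin.ext (by omega)) hlj2
              rw [if_neg hlj, sub_zero, htail l this, mul_zero, if_neg]
              intro h; exact hlj2 (h.symm)
        rw [heq]
        refine Submodule.smul_mem _ _ (Submodule.sub_mem _ hvmem ?_)
        refine sum_mem fun k hk => Submodule.smul_mem _ _ ?_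
        have : (k:ℕ) < (j:ℕ) := (Finset.mem_filter.mp hk).2
        exact IH k (by omega)
  rw [Submodule.eq_top_iff']
  intro x
  rw [pi_eq_sum_univ x]
  exact sum_mem fun i _ => Submodule.smul_mem _ _ (hbasis n i i.isLt)
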